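/- Let G be a graph, v a vertex of G with neighborhood N[v] = N(v) ∪ {v}, R(v) the set of vertices in N[v] all of whose neighbors lie in N[v], and suppose G is r-regular with every open neighborhood inducing exactly binom(r,2) - k edges, where k ≥ 1. Then |R(v)| ≥ r + 1 - 2k. -/
import Mathlib


/-- Let `G` be `r`-regular with every open neighborhood inducing exactly
`binom(r,2) - k` edges (`k ≥ 1`), let `v` be a vertex with closed neighborhood
`N[v]`, and let `R(v)` be the set of vertices of `N[v]` all of whose neighbors
lie in `N[v]`. Then `|R(v)| ≥ r + 1 - 2k`. -/
lemma chooseTwoAux (r : ℕ) : 2 * r.choose 2 + r = r * r := by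
  induction r with
  | zero => simp
  | succ n ih =>
    have h1 : (n+1).choose 2 = n.choose 1 + n.choose 2 := Nat.choose_succ_succ n 1
    have h2 : n.choose 1 = n := Nat.choose_one_right n
    have h3 : (n+1)*(n+1) = n*n + 2*n + 1 := by ring
    omega

theorem stmt15 {V : Type*} [Fintype V] [DecidableEq V]
    (G : SimpleGraph V) [DecidableRel G.Adj] (r k : ℕ) (hk : 1 ≤ k)
    (hreg : ∀ v, G.degree v = r)
    (hc : ∀ v, (Finset.univ.filter fun p : V × V =>
        G.Adj v p.1 ∧ G.Adj v p.2 ∧ G.Adj p.1 p.2).card + 2 * k = 2 * r.choose 2)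
    (v : V) :
    (r : ℤ) + 1 - 2 * (k : ℤ) ≤
      (((insert v (G.neighborFinset v)).filter fun w =>
          ∀ u, G.Adj w u → u ∈ insert v (G.neighborFinset v)).card : ℤ) := by
  classical
  set N := G.neighborFinset v with hN
  have hvN : v ∉ N := by simp [hN]
  have hNcard : N.card = r := by simpa [hN] using hreg v
  set P : Finset (V × V) := Finset.univ.filter (fun p : V × V =>
      G.Adj v p.1 ∧ G.Adj v p.2 ∧ p.1 ≠ p.2 ∧ ¬ G.Adj p.1 p.2) with hP
  set A : Finset (V × V) := Finset.univ.filter (fun p : V × V =>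
      G.Adj v p.1 ∧ G.Adj v p.2 ∧ G.Adj p.1 p.2) with hA
  set D : Finset (V × V) := Finset.univ.filter (fun p : V × V =>
      G.Adj v p.1 ∧ G.Adj v p.2) with hD
  have hDcard : D.card = r * r := by
    have hDeq : D = N ×ˢ N := by
      ext p; simp [hD, hN, Finset.mem_product]
    rw [hDeq, Finset.card_product, hNcard]
  have hsplit1 : (D.filter fun p => p.1 = p.2).card
      + (D.filter fun p => ¬ p.1 = p.2).card = D.card :=
    Finset.card_filter_add_card_filter_not _
  have hdiag : (D.filter fun p => p.1 = p.2).card = r := by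
    have : (D.filter fun p => p.1 = p.2) = N.image (fun x => (x, x)) := by
      ext p
      simp only [Finset.mem_filter, Finset.mem_image, hD, hN,
        Finset.mem_univ, true_and, SimpleGraph.mem_neighborFinset]
      constructor
      · rintro ⟨⟨h1, h2⟩, h3⟩
        exact ⟨p.1, h1, Prod.ext rfl h3⟩
      · rintro ⟨x, hx, rfl⟩
        exact ⟨⟨hx, hx⟩, rfl⟩
    rw [this, Finset.card_image_of_injective _ (fun a b h => (Prod.mk.injEq _ _ _ _).mp h |>.1), hNcard]
  have hsplit2 : ((D.filter fun p => ¬ p.1 = p.2).filter fun p => G.Adj p.1 p.2).card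
      + ((D.filter fun p => ¬ p.1 = p.2).filter fun p => ¬ G.Adj p.1 p.2).card
      = (D.filter fun p => ¬ p.1 = p.2).card :=
    Finset.card_filter_add_card_filter_not _
  have hAeq : (D.filter fun p => ¬ p.1 = p.2).filter (fun p => G.Adj p.1 p.2) = A := by
    ext p
    simp only [Finset.mem_filter, hD, hA, Finset.mem_univ, true_and]
    constructor
    · rintro ⟨⟨⟨h1, h2⟩, _⟩, h3⟩; exact ⟨h1, h2, h3⟩
    · rintro ⟨h1, h2, h3⟩; exact ⟨⟨⟨h1, h2⟩, h3.ne⟩, h3⟩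
  have hPeq : (D.filter fun p => ¬ p.1 = p.2).filter (fun p => ¬ G.Adj p.1 p.2) = P := by
    ext p
    simp only [Finset.mem_filter, hD, hP, Finset.mem_univ, true_and]
    tauto
  have hchoose : 2 * r.choose 2 + r = r * r := chooseTwoAux r
  have hPcard : P.card = 2 * k := by
    have hAk := hc v
    rw [← hA] at hAk
    rw [hAeq, hPeq] at hsplit2
    omega
  set B : Finset V := N.filter (fun w => ∃ u ∈ N, u ≠ w ∧ ¬ G.Adj w u) with hB
  have hBP : B ⊆ P.image Prod.snd := by
    intro w hw
    rw [hB, Finset.mem_filter] at hw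
    obtain ⟨hwN, u, huN, hne, hnadj⟩ := hw
    rw [Finset.mem_image]
    refine ⟨(u, w), ?_, rfl⟩
    rw [hP, Finset.mem_filter]
    refine ⟨Finset.mem_univ _, ?_, ?_, hne, fun h => hnadj h.symm⟩
    · simpa [hN] using huN
    · simpa [hN] using hwN
  have hBcard : B.card ≤ 2 * k := by
    calc B.card ≤ (P.image Prod.snd).card := Finset.card_le_card hBP
    _ ≤ P.card := Finset.card_image_le
    _ = 2 * k := hPcard
  have hBsub : B ⊆ insert v N := fun w hw =>
    Finset.mem_insert_of_mem (Finset.mem_filter.mp hw).1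
  have hsub : insert v N \ B ⊆ (insert v N).filter
      (fun w => ∀ u, G.Adj w u → u ∈ insert v N) := by
    intro w hw
    rw [Finset.mem_sdiff] at hw
    obtain ⟨hw1, hw2⟩ := hw
    rw [Finset.mem_filter]
    refine ⟨hw1, ?_⟩
    rcases Finset.mem_insert.mp hw1 with rfl | hwN
    · intro u hadj
      exact Finset.mem_insert_of_mem (by simpa [hN] using hadj)
    · have hall : ∀ u ∈ N, u ≠ w → G.Adj w u := by
        intro u hu hne
        by_contra hcon
        exact hw2 (by rw [hB, Finset.mem_filter]; exact ⟨hwN, u, hu, hne, hcon⟩)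
      have hr1 : 1 ≤ r := hNcard ▸ Finset.card_pos.mpr ⟨w, hwN⟩
      intro u hadj
      have hsubnb : insert v (N.erase w) ⊆ G.neighborFinset w := by
        intro x hx
        rcases Finset.mem_insert.mp hx with hxv | hx
        · rw [SimpleGraph.mem_neighborFinset, hxv]
          exact (by simpa [hN] using hwN : G.Adj v w).symm
        · rw [SimpleGraph.mem_neighborFinset]
          exact hall x (Finset.mem_of_mem_erase hx) (Finset.ne_of_mem_erase hx)
      have hcards : (insert v (N.erase w)).card = r := by
        rw [Finset.card_insert_of_notMem (fun h => hvN (Finset.mem_of_mem_erase h)),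
          Finset.card_erase_of_mem hwN, hNcard]
        omega
      have hnb : G.neighborFinset w = insert v (N.erase w) := by
        symm
        apply Finset.eq_of_subset_of_card_le hsubnb
        rw [hcards]
        exact le_of_eq (by rw [G.card_neighborFinset_eq_degree w, hreg w])
      have : u ∈ G.neighborFinset w := by rwa [SimpleGraph.mem_neighborFinset]
      rw [hnb] at this
      rcases Finset.mem_insert.mp this with rfl | h
      · exact Finset.mem_insert_self _ _
      · exact Finset.mem_insert_of_mem (Finset.mem_of_mem_erase h)
  have hc1 : (insert v N \ B).card + B.card = r + 1 := by
    rw [Finset.card_sdiff_add_card_eq_card hBsub,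
      Finset.card_insert_of_notMem hvN, hNcard]
  have hR : (insert v N \ B).card ≤ ((insert v N).filter
      (fun w => ∀ u, G.Adj w u → u ∈ insert v N)).card :=
    Finset.card_le_card hsub
  omega
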